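/- Let X be a sum of n independent {0,1}-valued random variables. Then for all ε ∈ (0,1) and δ ∈ (0,1), Pr[X ≥ e^{ε}·E[X] + ((e^{ε}+1)/ε)·ln(1/δ)] ≤ δ. -/

import Mathlib

open MeasureTheory ProbabilityTheory

lemma stmt6_exp_eq (ε : ℝ) {x : ℝ} (hx : x = 0 ∨ x = 1) :
    Real.exp (ε * x) = 1 + (Real.exp ε - 1) * x := by
  rcases hx with h | h <;> simp [h]

/-- Let `X = ∑ᵢ Xᵢ` be a sum of `n` independent `{0,1}`-valued random variables.
Then for all `ε, δ ∈ (0,1)`,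
`Pr[X ≥ e^ε·E[X] + ((e^ε + 1)/ε)·ln(1/δ)] ≤ δ`. -/
theorem stmt6 {Ω : Type*} [MeasurableSpace Ω] (μ : Measure Ω) [IsProbabilityMeasure μ]
    (n : ℕ) (X : Fin n → Ω → ℝ)
    (hmeas : ∀ i, Measurable (X i))
    (hval : ∀ i ω, X i ω = 0 ∨ X i ω = 1)
    (hindep : iIndepFun X μ)
    (ε δ : ℝ) (hε : ε ∈ Set.Ioo (0 : ℝ) 1) (hδ : δ ∈ Set.Ioo (0 : ℝ) 1) :
    (μ {ω | Real.exp ε * (∫ ω', (∑ i, X i ω') ∂μ) +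
        ((Real.exp ε + 1) / ε) * Real.log (1 / δ) ≤ ∑ i, X i ω}).toReal ≤ δ := by
  obtain ⟨hε0, hε1⟩ := hε
  obtain ⟨hδ0, hδ1⟩ := hδ
  -- integrability of each X i
  have hXint : ∀ i, Integrable (X i) μ := by
    intro i
    refine (integrable_const (1 : ℝ)).mono' (hmeas i).aestronglyMeasurable ?_
    filter_upwards with ω
    rcases hval i ω with h | h <;> simp [h]
  have hexpeq : ∀ i, (fun ω => Real.exp (ε * X i ω)) =
      fun ω => 1 + (Real.exp ε - 1) * X i ω := by
    intro i; funext ω; exact stmt6_exp_eq ε (hval i ω)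
  have hexpint : ∀ i, Integrable (fun ω => Real.exp (ε * X i ω)) μ := by
    intro i
    rw [hexpeq i]
    exact (integrable_const 1).add ((hXint i).const_mul _)
  -- the expectation of X i
  set p : Fin n → ℝ := fun i => ∫ ω, X i ω ∂μ with hp
  have hp0 : ∀ i, 0 ≤ p i := fun i => integral_nonneg fun ω => by
    rcases hval i ω with h | h <;> simp [h]
  -- mgf of each X i
  have hmgf : ∀ i, mgf (X i) μ ε = 1 + (Real.exp ε - 1) * p i := by
    intro i
    rw [mgf, hexpeq i, integral_add (integrable_const 1) ((hXint i).const_mul _)]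
    simp [integral_const, integral_const_mul, hp]
  have hmgf_le : ∀ i, mgf (X i) μ ε ≤ Real.exp ((Real.exp ε - 1) * p i) := by
    intro i
    rw [hmgf i]
    have := Real.add_one_le_exp ((Real.exp ε - 1) * p i)
    linarith
  have hmgf_nonneg : ∀ i, 0 ≤ mgf (X i) μ ε := fun i => mgf_nonneg
  -- mgf of the sum
  set m : ℝ := ∫ ω', (∑ i, X i ω') ∂μ with hm
  have hmsum : m = ∑ i, p i := by
    rw [hm]
    rw [integral_finset_sum _ (fun i _ => hXint i)]
  have hm0 : 0 ≤ m := by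
    rw [hmsum]; exact Finset.sum_nonneg fun i _ => hp0 i
  have hmgfsum : mgf (∑ i, X i) μ ε ≤ Real.exp ((Real.exp ε - 1) * m) := by
    rw [hindep.mgf_sum hmeas]
    calc ∏ i, mgf (X i) μ ε ≤ ∏ i, Real.exp ((Real.exp ε - 1) * p i) :=
          Finset.prod_le_prod (fun i _ => hmgf_nonneg i) (fun i _ => hmgf_le i)
      _ = Real.exp ((Real.exp ε - 1) * m) := by
          rw [← Real.exp_sum, hmsum, Finset.mul_sum]
  have hintsum : Integrable (fun ω => Real.exp (ε * (∑ i, X i) ω)) μ :=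
    hindep.integrable_exp_mul_sum hmeas (fun i _ => hexpint i)
  set a : ℝ := Real.exp ε * m + ((Real.exp ε + 1) / ε) * Real.log (1 / δ) with ha
  have hset : {ω | Real.exp ε * m + ((Real.exp ε + 1) / ε) * Real.log (1 / δ)
      ≤ ∑ i, X i ω} = {ω | a ≤ (∑ i, X i) ω} := by
    ext ω; simp [ha, Finset.sum_apply]
  rw [hset]
  calc (μ {ω | a ≤ (∑ i, X i) ω}).toReal
      ≤ Real.exp (-ε * a) * mgf (∑ i, X i) μ ε :=
        measure_ge_le_exp_mul_mgf a hε0.le hintsum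
    _ ≤ Real.exp (-ε * a) * Real.exp ((Real.exp ε - 1) * m) := by
        exact mul_le_mul_of_nonneg_left hmgfsum (Real.exp_pos _).le
    _ = Real.exp ((Real.exp ε - 1) * m - ε * a) := by
        rw [← Real.exp_add]; ring_nf
    _ ≤ δ := by
        have hlog : Real.log (1 / δ) = -Real.log δ := by
          rw [one_div, Real.log_inv]
        have hεa : ε * a = ε * Real.exp ε * m - (Real.exp ε + 1) * Real.log δ := by
          rw [ha, hlog]; field_simp; ring
        have hkey : Real.exp ε - 1 - ε * Real.exp ε ≤ 0 := by
          have h1 : -ε + 1 ≤ Real.exp (-ε) := Real.add_one_le_exp (-ε)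
          have h2 : Real.exp (-ε) * Real.exp ε = 1 := by
            rw [← Real.exp_add]; simp
          nlinarith [Real.exp_pos ε]
        have harg : (Real.exp ε - 1) * m - ε * a ≤ (Real.exp ε + 1) * Real.log δ := by
          rw [hεa]
          nlinarith
        calc Real.exp ((Real.exp ε - 1) * m - ε * a)
            ≤ Real.exp ((Real.exp ε + 1) * Real.log δ) := Real.exp_le_exp.mpr harg
          _ = δ ^ (Real.exp ε + 1) := by
              rw [Real.rpow_def_of_pos hδ0, mul_comm]
          _ ≤ δ ^ (1 : ℝ) := by
              apply Real.rpow_le_rpow_of_exponent_ge hδ0 hδ1.le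
              nlinarith [Real.exp_pos ε]
          _ = δ := Real.rpow_one δ
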